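/- Let A and B = (B_1 | ··· | B_t) be m × n matrices over a field k, where B_j has size m × n_j, and suppose rank(B) ≥ r. Let C_1,...,C_t be subsets of k with |C_j| > min{r, n_j} for each j. Then there exists (c_1,...,c_t) ∈ C_1 × ··· × C_t such that rank(A + (c_1 B_1 | ··· | c_t B_t)) ≥ r. -/

import Mathlib

open Matrix MvPolynomial

lemma aux_uni {k : Type*} [Field k] (p : Polynomial k) (hp : p ≠ 0) (C : Finset k)
    (h : p.natDegree < C.card) : ∃ c ∈ C, p.eval c ≠ 0 := by
  by_contra hc
  push_neg at hc
  classical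
  have hsub : C ⊆ p.roots.toFinset := fun c hcC => by
    simp only [Multiset.mem_toFinset, Polynomial.mem_roots hp, Polynomial.IsRoot]
    exact hc c hcC
  have := (Finset.card_le_card hsub).trans
    ((p.roots.toFinset_card_le).trans (Polynomial.card_roots' p))
  omega

lemma aux_grid {k : Type*} [Field k] : ∀ (t : ℕ) (P : MvPolynomial (Fin t) k), P ≠ 0 →
    ∀ (C : Fin t → Finset k), (∀ j, P.degreeOf j < (C j).card) →
    ∃ c : Fin t → k, (∀ j, c j ∈ C j) ∧ MvPolynomial.eval c P ≠ 0 := by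
  intro t
  induction t with
  | zero =>
    intro P hP C _
    obtain ⟨a, rfl⟩ := MvPolynomial.C_surjective (Fin 0) P
    exact ⟨fun j => j.elim0, fun j => j.elim0, by simpa using fun h => hP (by rw [h, map_zero])⟩
  | succ n ih =>
    intro P hP C hC
    set Q := finSuccEquiv k n P with hQ
    have hQ0 : Q ≠ 0 := by
      intro h
      apply hP
      have := (finSuccEquiv k n).injective (a₁ := P) (a₂ := 0)
      simp only [map_zero] at this
      exact this (by rw [← hQ, h])
    have hlead : Q.leadingCoeff ≠ 0 := Polynomial.leadingCoeff_ne_zero.2 hQ0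
    have hdeg : ∀ j : Fin n, (Q.leadingCoeff).degreeOf j < (C j.succ).card := fun j =>
      lt_of_le_of_lt (degreeOf_coeff_finSuccEquiv P j Q.natDegree) (hC j.succ)
    obtain ⟨c', hc'mem, hc'⟩ := ih Q.leadingCoeff hlead (fun j => C j.succ) hdeg
    set q : Polynomial k := Q.map (MvPolynomial.eval c') with hq
    have hqcoe : q.coeff Q.natDegree ≠ 0 := by
      rw [hq, Polynomial.coeff_map]; exact hc'
    have hq0 : q ≠ 0 := fun h => hqcoe (by rw [h, Polynomial.coeff_zero])
    have hqdeg : q.natDegree < (C 0).card := by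
      have h1 : q.natDegree ≤ Q.natDegree := Polynomial.natDegree_map_le
      have h2 : Q.natDegree = P.degreeOf 0 := natDegree_finSuccEquiv P
      have := hC 0
      omega
    obtain ⟨y, hy, hy0⟩ := aux_uni q hq0 (C 0) hqdeg
    refine ⟨Fin.cons y c', fun j => ?_, ?_⟩
    · refine Fin.cases ?_ ?_ j
      · simpa using hy
      · intro i; simpa using hc'mem i
    · rw [eval_eq_eval_mv_eval']
      exact hy0

open Submodule in
lemma aux_exists_inj_li {k V : Type*} [Field k] [AddCommGroup V] [Module k V]
    [FiniteDimensional k V] {ι : Type*} (v : ι → V) (r : ℕ)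
    (hr : r ≤ Module.finrank k (span k (Set.range v))) :
    ∃ g : Fin r → ι, Function.Injective g ∧ LinearIndependent k (v ∘ g) := by
  classical
  obtain ⟨b, hbsub, hbspan, hbli⟩ := exists_linearIndependent k (Set.range v)
  have hbfin : b.Finite := hbli.setFinite
  haveI : Fintype b := hbfin.fintype
  have hcard : r ≤ Fintype.card b := by
    have h1 : Module.finrank k (span k b) = b.toFinset.card := finrank_span_set_eq_card hbli
    rw [hbspan] at h1
    rw [Set.toFinset_card] at h1
    omega
  obtain ⟨e⟩ : Nonempty (Fin r ↪ b) := Function.Embedding.nonempty_of_card_le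
    (by simpa using hcard)
  have hchoice : ∀ i : Fin r, ∃ x : ι, v x = (e i : V) := fun i => hbsub (e i).2
  choose g hg using hchoice
  have hvg : v ∘ g = fun i => ((e i : V)) := funext fun i => hg i
  have hli : LinearIndependent k (v ∘ g) := by
    rw [hvg]
    exact hbli.comp e e.injective
  refine ⟨g, fun i i' hii => ?_, hli⟩
  apply e.injective
  apply Subtype.ext
  rw [← hg i, ← hg i', hii]

lemma aux_rank_le {k : Type*} [Field k] {m n : Type*} [Fintype m] [Fintype n]
    [DecidableEq m] (M : Matrix m n k) {r : ℕ} (f : Fin r → m) (g : Fin r → n)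
    (hU : IsUnit (M.submatrix f g)) : r ≤ M.rank := by
  classical
  have hcols : LinearIndependent k (fun s => (M.submatrix f g)ᵀ s) :=
    Matrix.linearIndependent_cols_iff_isUnit.2 hU
  have hcomp : (fun s => (M.submatrix f g)ᵀ s) = (LinearMap.funLeft k k f) ∘ (Mᵀ ∘ g) := by
    funext s; funext i; rfl
  rw [hcomp] at hcols
  have hli : LinearIndependent k (Mᵀ ∘ g) := hcols.of_comp _
  rw [Matrix.rank_eq_finrank_span_cols, Matrix.col]
  have h1 : Module.finrank k (Submodule.span k (Set.range (Mᵀ ∘ g))) = r := by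
    rw [finrank_span_eq_card hli]; simp
  have h2 : Submodule.span k (Set.range (Mᵀ ∘ g)) ≤ Submodule.span k (Set.range Mᵀ) :=
    Submodule.span_mono (Set.range_comp_subset_range _ _)
  have := Submodule.finrank_mono h2
  omega

lemma aux_exists_submatrix {k : Type*} [Field k] {m n : Type*} [Fintype m] [Fintype n]
    [DecidableEq m] [DecidableEq n] (B : Matrix m n k) {r : ℕ} (hB : r ≤ B.rank) :
    ∃ (f : Fin r → m) (g : Fin r → n), Function.Injective f ∧ Function.Injective g ∧
      IsUnit (B.submatrix f g) := by
  classical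
  rw [Matrix.rank_eq_finrank_span_cols] at hB
  obtain ⟨g, hginj, hgli⟩ := aux_exists_inj_li (fun j => Bᵀ j) r hB
  set N : Matrix m (Fin r) k := B.submatrix id g with hN
  have hNT : Nᵀ = Bᵀ ∘ g := by funext s i; rfl
  have hrankN : N.rank = r := by
    rw [Matrix.rank_eq_finrank_span_cols, Matrix.col, hNT, finrank_span_eq_card hgli]; simp
  have hrankNT : r ≤ Nᵀ.rank := by rw [Matrix.rank_transpose]; omega
  rw [Matrix.rank_eq_finrank_span_cols] at hrankNT
  obtain ⟨f, hfinj, hfli⟩ := aux_exists_inj_li (fun i => Nᵀᵀ i) r hrankNT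
  refine ⟨f, g, hfinj, hginj, ?_⟩
  apply Matrix.linearIndependent_rows_iff_isUnit.1
  have : (fun s => (B.submatrix f g) s) = (fun i => Nᵀᵀ i) ∘ f := by
    funext s; funext i; rfl
  change LinearIndependent k (fun s => (B.submatrix f g) s)
  rw [this]
  exact hfli

lemma aux_prod_X {k : Type*} [CommSemiring k] {σ ι : Type*} [DecidableEq σ]
    (T : Finset ι) (h : ι → σ) :
    ∏ s ∈ T, (X (h s) : MvPolynomial σ k) =
      monomial (∑ s ∈ T, Finsupp.single (h s) 1) 1 := by
  classical
  induction T using Finset.induction_on with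
  | empty => simp
  | insert a T hnotmem ih =>
    rw [Finset.prod_insert hnotmem, Finset.sum_insert hnotmem, ih, X, monomial_mul, one_mul]

theorem stmt_2 {k : Type*} [Field k] {m t : ℕ} (nn : Fin t → ℕ)
    (A B : Matrix (Fin m) (Σ j : Fin t, Fin (nn j)) k) (r : ℕ)
    (hB : r ≤ B.rank)
    (C : Fin t → Finset k) (hC : ∀ j, min r (nn j) < (C j).card) :
    ∃ c : Fin t → k, (∀ j, c j ∈ C j) ∧
      r ≤ (A + Matrix.of fun i jl => c jl.1 * B i jl).rank := by
  classical
  obtain ⟨f, g, hfinj, hginj, hU⟩ := aux_exists_submatrix B hB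
  set aa : Fin r → Fin r → MvPolynomial (Fin t) k :=
    fun s i => MvPolynomial.C (A (f i) (g s)) with haa
  set bb : Fin r → Fin r → MvPolynomial (Fin t) k :=
    fun s i => MvPolynomial.C (B (f i) (g s)) with hbb
  set w : Fin r → Fin r → MvPolynomial (Fin t) k :=
    fun s => (X (g s).1 : MvPolynomial (Fin t) k) • bb s with hw
  set P : MvPolynomial (Fin t) k :=
    (Matrix.detRowAlternating : (Fin r → MvPolynomial (Fin t) k)
      [⋀^Fin r]→ₗ[MvPolynomial (Fin t) k] MvPolynomial (Fin t) k) (w + aa) with hP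
  set E : Finset (Fin r) → Matrix (Fin r) (Fin r) k := fun T =>
    Matrix.of (T.piecewise (fun s i => B (f i) (g s)) (fun s i => A (f i) (g s))) with hE
  set e : Finset (Fin r) → (Fin t →₀ ℕ) :=
    fun T => ∑ s ∈ T, Finsupp.single (g s).1 1 with he
  -- the expansion
  have hexp : P = ∑ T : Finset (Fin r), monomial (e T) ((E T).det) := by
    rw [hP, ← AlternatingMap.coe_multilinearMap,
      (Matrix.detRowAlternating.toMultilinearMap).map_add_univ w aa]
    refine Finset.sum_congr rfl fun T _ => ?_
    have h1 : T.piecewise w aa =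
        T.piecewise (fun s => (X (g s).1 : MvPolynomial (Fin t) k) • (T.piecewise bb aa s))
          (T.piecewise bb aa) := by
      funext s
      by_cases hs : s ∈ T
      · simp [Finset.piecewise_eq_of_mem _ _ _ hs, hw]
      · simp [Finset.piecewise_eq_of_notMem _ _ _ hs]
    have h2 : (Matrix.detRowAlternating.toMultilinearMap) (T.piecewise w aa)
        = (∏ s ∈ T, (X (g s).1 : MvPolynomial (Fin t) k)) •
          (Matrix.detRowAlternating.toMultilinearMap) (T.piecewise bb aa) := by
      rw [h1]
      exact MultilinearMap.map_piecewise_smul _ _ _ T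
    have h3 : (T.piecewise bb aa) = fun s i => MvPolynomial.C (E T s i) := by
      funext s
      by_cases hs : s ∈ T
      · simp [Finset.piecewise_eq_of_mem _ _ _ hs, hE, hbb]
      · simp [Finset.piecewise_eq_of_notMem _ _ _ hs, hE, haa]
    have h4 : (Matrix.detRowAlternating.toMultilinearMap) (T.piecewise bb aa)
        = MvPolynomial.C ((E T).det) := by
      rw [h3]
      have : (fun s i => MvPolynomial.C (E T s i)) =
          ((E T).map (MvPolynomial.C : k →+* MvPolynomial (Fin t) k)) := rfl
      rw [this]
      exact ((MvPolynomial.C : k →+* MvPolynomial (Fin t) k).map_det (E T)).symm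
    rw [h2, h4, aux_prod_X, smul_eq_mul, MvPolynomial.C_apply, monomial_mul, add_zero, one_mul]
  set d : Fin t → ℕ := fun j => (Finset.univ.filter (fun s : Fin r => (g s).1 = j)).card with hd
  have heapp : ∀ (T : Finset (Fin r)) (j : Fin t),
      e T j = (T.filter (fun s => (g s).1 = j)).card := by
    intro T j
    rw [he]
    rw [Finsupp.finset_sum_apply]
    simp [Finsupp.single_apply]
  have hcardT : ∀ T : Finset (Fin r), ∑ j, e T j = T.card := by
    intro T
    simp_rw [heapp]
    exact (Finset.card_eq_sum_card_fiberwise (fun s _ => Finset.mem_univ ((g s).1))).symm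
  have hE_univ : E Finset.univ = (B.submatrix f g)ᵀ := by
    funext s i
    simp [hE]
  have hdetB : (E Finset.univ).det ≠ 0 := by
    rw [hE_univ, Matrix.det_transpose]
    exact ((Matrix.isUnit_iff_isUnit_det _).1 hU).ne_zero
  have hcoeff : MvPolynomial.coeff (e Finset.univ) P = (E Finset.univ).det := by
    rw [hexp, MvPolynomial.coeff_sum]
    rw [Finset.sum_eq_single Finset.univ]
    · simp [coeff_monomial]
    · intro T _ hT
      rw [coeff_monomial, if_neg]
      intro hTe
      apply hT
      apply Finset.eq_univ_of_card
      have h1 := hcardT T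
      have h2 := hcardT Finset.univ
      rw [hTe, h2, Finset.card_univ] at h1
      rw [h1]
    · intro h
      exact absurd (Finset.mem_univ _) h
  have hP0 : P ≠ 0 := fun h => hdetB (by rw [← hcoeff, h, MvPolynomial.coeff_zero])
  have hdegP : ∀ j, P.degreeOf j ≤ d j := by
    intro j
    rw [hexp]
    refine le_trans (degreeOf_sum_le _ _ _) ?_
    rw [Finset.sup_le_iff]
    intro T _
    have h1 : (monomial (e T) ((E T).det)).degreeOf j ≤ e T j := by
      by_cases ha : (E T).det = 0
      · simp [ha]
      · rw [degreeOf_monomial_eq _ _ ha]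
    refine h1.trans ?_
    rw [heapp, hd]
    exact Finset.card_le_card (Finset.filter_subset_filter _ (Finset.subset_univ T))
  have hdlt : ∀ j, d j < (C j).card := by
    intro j
    have h1 : d j ≤ r := by
      rw [hd]
      calc (Finset.univ.filter (fun s : Fin r => (g s).1 = j)).card
          ≤ (Finset.univ : Finset (Fin r)).card := Finset.card_filter_le _ _
        _ = r := by simp
    have h2 : d j ≤ nn j := by
      rw [hd]
      have := Finset.card_le_card_of_injOn (f := fun s : Fin r => ((g s).2 : ℕ))
        (s := Finset.univ.filter (fun s : Fin r => (g s).1 = j)) (t := Finset.range (nn j))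
        ?_ ?_
      · simpa using this
      · intro s hs
        rw [Finset.mem_coe, Finset.mem_filter] at hs
        rw [Finset.mem_coe, Finset.mem_range]
        show ((g s).2 : ℕ) < nn j
        rw [← hs.2]
        exact (g s).2.isLt
      · intro s hs s' hs' hval
        rw [Finset.mem_coe, Finset.mem_filter] at hs hs'
        apply hginj
        exact Sigma.ext (hs.2.trans hs'.2.symm)
          ((Fin.heq_ext_iff (congrArg nn (hs.2.trans hs'.2.symm))).2 hval)
    have := hC j
    omega
  obtain ⟨c, hcmem, hceval⟩ := aux_grid t P hP0 C
    (fun j => lt_of_le_of_lt (hdegP j) (hdlt j))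
  refine ⟨c, hcmem, ?_⟩
  apply aux_rank_le _ f g
  rw [Matrix.isUnit_iff_isUnit_det, isUnit_iff_ne_zero]
  have hmap : (MvPolynomial.eval c) P =
      (((A + Matrix.of fun i jl => c jl.1 * B i jl)).submatrix f g)ᵀ.det := by
    have hPdet : P = (Matrix.of (w + aa)).det := rfl
    rw [hPdet, RingHom.map_det]
    congr 1
    funext s i
    simp only [RingHom.mapMatrix_apply, Matrix.map_apply, Matrix.of_apply, Pi.add_apply,
      hw, hbb, haa, Pi.smul_apply, smul_eq_mul, _root_.map_add, _root_.map_mul, MvPolynomial.eval_C,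
      MvPolynomial.eval_X, Matrix.transpose_apply, Matrix.submatrix_apply, Matrix.add_apply]
    ring
  rw [← Matrix.det_transpose, ← hmap]
  exact hceval
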